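/- For every n ≥ 2, the number of 2-tree-lines starting from the root whose last added node is at level n equals ((4 + 2·√3)^(n−1) + (4 − 2·√3)^(n−1)) / 2. That is, the number of finite sequences v₁, …, v_N (N ≥ 1) of pairwise distinct binary strings such that v₁ has length 1, v₂ is a child of the root or of v₁, v_{i+1} is a child of v_i or of v_{i−1} for every i ≥ 2, and the last string v_N has length n − 1, is ((4 + 2·√3)^(n−1) + (4 − 2·√3)^(n−1)) / 2. -/

import Mathlib

/-- `q` is a child of `p` in the infinite binary tree, nodes being encoded
as finite boolean strings (the root is the empty string). -/
def IsChild (p q : List Bool) : Prop := ∃ b : Bool, q = p ++ [b]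

/-- A 2-tree-line starting from the root: a finite sequence `v₁, …, v_N` of
pairwise distinct binary strings such that `v₁` is a child of the root
(i.e. has length 1), `v₂` is a child of the root or of `v₁`, and each
`v_{i+1}` with `i ≥ 2` is a child of `v_i` or of `v_{i-1}`. -/
def IsTwoTreeLine (v : List (List Bool)) : Prop :=
  v.Nodup ∧
  (∀ h : 0 < v.length, (v.get ⟨0, h⟩).length = 1) ∧
  (∀ h : 1 < v.length,
    IsChild [] (v.get ⟨1, h⟩) ∨
      IsChild (v.get ⟨0, by omega⟩) (v.get ⟨1, h⟩)) ∧
  (∀ i : ℕ, ∀ h : i + 2 < v.length,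
    IsChild (v.get ⟨i + 1, by omega⟩) (v.get ⟨i + 2, h⟩) ∨
      IsChild (v.get ⟨i, by omega⟩) (v.get ⟨i + 2, h⟩))

inductive Mv where
  | B (b : Bool)
  | A (b : Bool)
deriving DecidableEq

instance : Finite Mv := by
  apply Finite.of_injective (fun m : Mv => match m with | .B b => (true, b) | .A b => (false, b))
  intro x y h
  cases x <;> cases y <;> simp_all

/-- decode a word of moves into the list of nodes, given the two previous nodes. -/
def go : List Bool → List Bool → List Mv → List (List Bool)
  | _, b, (Mv.B c :: r) => (b ++ [c]) :: go b (b ++ [c]) r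
  | a, b, (Mv.A c :: r) => (a ++ [c]) :: go b (a ++ [c]) r
  | _, _, [] => []

/-- validity of a word from a state: `some c` means the last node is the child
of the second-last with bit `c` (so move `A c` would duplicate it). -/
def VF : Option Bool → List Mv → Prop
  | _, [] => True
  | _, (Mv.B c :: r) => VF (some c) r
  | f, (Mv.A c :: r) => f ≠ some c ∧ VF none r

def Valid (w : List Mv) : Prop := ∃ c r, w = Mv.B c :: r ∧ VF (some c) r

/-- levels of (second-last, last) nodes. -/
def stp : ℕ × ℕ → Mv → ℕ × ℕ
  | (_, q), Mv.B _ => (q, q + 1)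
  | (p, q), Mv.A _ => (q, p + 1)

def trk (w : List Mv) : ℕ × ℕ := w.foldl stp (0, 0)

lemma stp_invariant : ∀ (w : List Mv) (s : ℕ × ℕ), s.1 ≤ s.2 → s.2 ≤ s.1 + 1 →
    (w.foldl stp s).1 ≤ (w.foldl stp s).2 ∧ (w.foldl stp s).2 ≤ (w.foldl stp s).1 + 1 ∧
      w.length + s.1 + s.2 ≤ (w.foldl stp s).1 + (w.foldl stp s).2 := by
  intro w
  induction w with
  | nil => intro s h1 h2; simpa using ⟨h1, h2⟩
  | cons x r ih =>
    intro s h1 h2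
    obtain ⟨p, q⟩ := s
    cases x with
    | B c =>
      have := ih (q, q+1) (by omega) (by omega)
      simp only [List.foldl_cons, List.length_cons, stp] at *
      omega
    | A c =>
      have := ih (q, p+1) (by omega) (by omega)
      simp only [List.foldl_cons, List.length_cons, stp] at *
      omega

lemma trk_invariant (w : List Mv) :
    (trk w).1 ≤ (trk w).2 ∧ (trk w).2 ≤ (trk w).1 + 1 ∧ w.length ≤ (trk w).1 + (trk w).2 := by
  have := stp_invariant w (0,0) (by omega) (by omega)
  simpa [trk] using this

lemma trk_append (w : List Mv) (x : Mv) : trk (w ++ [x]) = stp (trk w) x := by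
  simp [trk, List.foldl_append]

inductive Chain2 : List Bool → List Bool → List (List Bool) → Prop
  | nil (a b) : Chain2 a b []
  | cons {a b x l} : (IsChild b x ∨ IsChild a x) → Chain2 b x l → Chain2 a b (x :: l)

lemma go_chain2 : ∀ (w : List Mv) (a b : List Bool), Chain2 a b (go a b w) := by
  intro w
  induction w with
  | nil => intro a b; exact Chain2.nil a b
  | cons x r ih =>
    intro a b
    cases x with
    | B c => exact Chain2.cons (Or.inl ⟨c, rfl⟩) (ih b (b ++ [c]))
    | A c => exact Chain2.cons (Or.inr ⟨c, rfl⟩) (ih b (a ++ [c]))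


lemma getLast?_cons_of_ne {α : Type*} (x : α) {t : List α} (h : t ≠ []) :
    (x :: t).getLast? = t.getLast? := by
  cases t with
  | nil => exact absurd rfl h
  | cons y t' => rw [List.getLast?_cons_cons]

lemma go_last : ∀ (w : List Mv) (a b : List Bool), w ≠ [] →
    ∃ l, (go a b w).getLast? = some l ∧
      l.length = (w.foldl stp (a.length, b.length)).2 := by
  intro w
  induction w with
  | nil => intro a b h; exact absurd rfl h
  | cons x r ih =>
    intro a b _
    rcases eq_or_ne r [] with rfl | hr
    · cases x with
      | B c => exact ⟨b ++ [c], by simp [go, stp]⟩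
      | A c => exact ⟨a ++ [c], by simp [go, stp]⟩
    · cases x with
      | B c =>
        obtain ⟨l, hl, hlen⟩ := ih b (b ++ [c]) hr
        refine ⟨l, ?_, ?_⟩
        · rw [show go a b (Mv.B c :: r) = (b ++ [c]) :: go b (b ++ [c]) r from rfl]
          rwa [getLast?_cons_of_ne _ ?_]
          · intro h
            obtain ⟨l', hl', _⟩ := ih b (b ++ [c]) hr
            rw [h] at hl'; simp at hl'
        · rw [hlen]; simp [stp]
      | A c =>
        obtain ⟨l, hl, hlen⟩ := ih b (a ++ [c]) hr
        refine ⟨l, ?_, ?_⟩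
        · rw [show go a b (Mv.A c :: r) = (a ++ [c]) :: go b (a ++ [c]) r from rfl]
          rwa [getLast?_cons_of_ne _ ?_]
          · intro h
            obtain ⟨l', hl', _⟩ := ih b (a ++ [c]) hr
            rw [h] at hl'; simp at hl'
        · rw [hlen]; simp [stp]

lemma append_singleton_inj {a b : List Bool} {c c' : Bool} (h : a ++ [c] = b ++ [c']) :
    a = b ∧ c = c' := by
  have hl : a.length = b.length := by
    have := congrArg List.length h; simpa using this
  obtain ⟨h1, h2⟩ := List.append_inj h hl
  simp at h2
  exact ⟨h1, h2⟩

lemma go_ne_nil (a b : List Bool) (x : Mv) (r : List Mv) : go a b (x :: r) ≠ [] := by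
  cases x <;> simp [go]

lemma go_fresh : ∀ (w : List Mv) (a b : List Bool) (f : Option Bool),
    VF f w → a.length ≤ b.length → b.length ≤ a.length + 1 → a ≠ b →
    (∀ c, b = a ++ [c] ↔ f = some c) →
    (∀ x ∈ go a b w, a.length + 1 ≤ x.length ∧ x ≠ b) ∧ (go a b w).Nodup := by
  intro w
  induction w with
  | nil => intro a b f _ _ _ _ _; simp [go]
  | cons m r ih =>
    intro a b f hvf h1 h2 hab hrel
    cases m with
    | B c =>
      have hvf' : VF (some c) r := hvf
      have hbe : b ≠ b ++ [c] := by
        intro h; have := congrArg List.length h; simp at this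
      have hrel' : ∀ c', b ++ [c] = b ++ [c'] ↔ (some c : Option Bool) = some c' := by
        intro c'
        constructor
        · intro h; obtain ⟨-, h2⟩ := append_singleton_inj h; rw [h2]
        · intro h; simp at h; rw [h]
      obtain ⟨H1, H2⟩ := ih b (b ++ [c]) (some c) hvf' (by simp)
        (by simp) hbe hrel'
      have hgo : go a b (Mv.B c :: r) = (b ++ [c]) :: go b (b ++ [c]) r := rfl
      rw [hgo]
      constructor
      · intro x hx
        rcases List.mem_cons.mp hx with rfl | hx
        · refine ⟨by simp; omega, ?_⟩
          intro h; exact hbe h.symm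
        · obtain ⟨hx1, _⟩ := H1 x hx
          refine ⟨by omega, ?_⟩
          intro h; subst h; omega
      · refine List.nodup_cons.mpr ⟨?_, H2⟩
        intro hmem
        exact (H1 _ hmem).2 rfl
    | A c =>
      obtain ⟨hfc, hvf'⟩ : f ≠ some c ∧ VF none r := hvf
      have hbe : b ≠ a ++ [c] := fun h => hfc ((hrel c).mp h)
      have hrel' : ∀ c', a ++ [c] = b ++ [c'] ↔ (none : Option Bool) = some c' := by
        intro c'
        constructor
        · intro h; exact absurd (append_singleton_inj h).1 hab
        · intro h; simp at h
      obtain ⟨H1, H2⟩ := ih b (a ++ [c]) none hvf' (by simp; omega)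
        (by simp; omega) hbe hrel'
      have hgo : go a b (Mv.A c :: r) = (a ++ [c]) :: go b (a ++ [c]) r := rfl
      rw [hgo]
      constructor
      · intro x hx
        rcases List.mem_cons.mp hx with rfl | hx
        · exact ⟨by simp, fun h => hbe h.symm⟩
        · obtain ⟨hx1, _⟩ := H1 x hx
          refine ⟨by omega, ?_⟩
          intro h; subst h; omega
      · refine List.nodup_cons.mpr ⟨?_, H2⟩
        intro hmem
        exact (H1 _ hmem).2 rfl

lemma go_inj : ∀ (w w' : List Mv) (a b : List Bool) (f : Option Bool),
    VF f w → VF f w' → a ≠ b → (∀ c, b = a ++ [c] ↔ f = some c) →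
    go a b w = go a b w' → w = w' := by
  intro w
  induction w with
  | nil =>
    intro w' a b f _ _ _ _ h
    cases w' with
    | nil => rfl
    | cons x r => exact absurd h.symm (go_ne_nil a b x r)
  | cons m r ih =>
    intro w' a b f hvf hvf' hab hrel h
    cases w' with
    | nil => exact absurd h (go_ne_nil a b m r)
    | cons m' r' =>
      cases m with
      | B c =>
        cases m' with
        | B c' =>
          have hh : (b ++ [c]) :: go b (b ++ [c]) r
              = (b ++ [c']) :: go b (b ++ [c']) r' := h
          have hc : c = c' := by
            have := (List.cons.injEq _ _ _ _).mp hh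
            exact (append_singleton_inj this.1).2
          subst hc
          have htl : go b (b ++ [c]) r = go b (b ++ [c]) r' :=
            ((List.cons.injEq _ _ _ _).mp hh).2
          have hbe : b ≠ b ++ [c] := by
            intro h; have := congrArg List.length h; simp at this
          have hrel' : ∀ c', b ++ [c] = b ++ [c'] ↔ (some c : Option Bool) = some c' := by
            intro c'
            constructor
            · intro h; obtain ⟨-, h2⟩ := append_singleton_inj h; rw [h2]
            · intro h; simp at h; rw [h]
          rw [ih r' b (b ++ [c]) (some c) hvf hvf' hbe hrel' htl]
        | A c' =>
          have hh : (b ++ [c]) :: go b (b ++ [c]) r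
              = (a ++ [c']) :: go b (a ++ [c']) r' := h
          have := ((List.cons.injEq _ _ _ _).mp hh).1
          exact absurd (append_singleton_inj this).1.symm hab
      | A c =>
        cases m' with
        | B c' =>
          have hh : (a ++ [c]) :: go b (a ++ [c]) r
              = (b ++ [c']) :: go b (b ++ [c']) r' := h
          have := ((List.cons.injEq _ _ _ _).mp hh).1
          exact absurd (append_singleton_inj this).1 hab
        | A c' =>
          have hh : (a ++ [c]) :: go b (a ++ [c]) r
              = (a ++ [c']) :: go b (a ++ [c']) r' := h
          have hc : c = c' := (append_singleton_inj ((List.cons.injEq _ _ _ _).mp hh).1).2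
          subst hc
          obtain ⟨hfc, hvfr⟩ : f ≠ some c ∧ VF none r := hvf
          obtain ⟨-, hvfr'⟩ : f ≠ some c ∧ VF none r' := hvf'
          have htl : go b (a ++ [c]) r = go b (a ++ [c]) r' :=
            ((List.cons.injEq _ _ _ _).mp hh).2
          have hbe : b ≠ a ++ [c] := fun hh' => hfc ((hrel c).mp hh')
          have hrel' : ∀ c', a ++ [c] = b ++ [c'] ↔ (none : Option Bool) = some c' := by
            intro c'
            constructor
            · intro h; exact absurd (append_singleton_inj h).1 hab
            · intro h; simp at h
          rw [ih r' b (a ++ [c]) none hvfr hvfr' hbe hrel' htl]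

lemma go_surj : ∀ (v : List (List Bool)) (a b : List Bool) (f : Option Bool),
    Chain2 a b v → v.Nodup → b ∉ v → a ≠ b →
    (∀ c, b = a ++ [c] ↔ f = some c) →
    ∃ w, VF f w ∧ go a b w = v := by
  intro v
  induction v with
  | nil => intro a b f _ _ _ _ _; exact ⟨[], trivial, rfl⟩
  | cons x l ih =>
    intro a b f hch hnd hbm hab hrel
    rcases hch with - | ⟨hstep, hch'⟩
    have hxl : x ∉ l := (List.nodup_cons.mp hnd).1
    have hndl : l.Nodup := (List.nodup_cons.mp hnd).2
    rcases hstep with ⟨c, rfl⟩ | hstep2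
    · -- x = b ++ [c]
      have hbe : b ≠ b ++ [c] := by
        intro h; have := congrArg List.length h; simp at this
      have hrel' : ∀ c', b ++ [c] = b ++ [c'] ↔ (some c : Option Bool) = some c' := by
        intro c'
        constructor
        · intro h; obtain ⟨-, h2⟩ := append_singleton_inj h; rw [h2]
        · intro h; simp at h; rw [h]
      obtain ⟨w', hw1, hw2⟩ := ih b (b ++ [c]) (some c) hch' hndl hxl hbe hrel'
      exact ⟨Mv.B c :: w', hw1, by rw [show go a b (Mv.B c :: w') = (b ++ [c]) :: go b (b ++ [c]) w' from rfl, hw2]⟩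
    · obtain ⟨c, rfl⟩ := hstep2
      have hbx : b ≠ a ++ [c] := by
        intro h; exact hbm (h ▸ List.mem_cons_self)
      have hfc : f ≠ some c := fun h => hbx ((hrel c).mpr h)
      have hrel' : ∀ c', a ++ [c] = b ++ [c'] ↔ (none : Option Bool) = some c' := by
        intro c'
        constructor
        · intro h; exact absurd (append_singleton_inj h).1 hab
        · intro h; simp at h
      obtain ⟨w', hw1, hw2⟩ := ih b (a ++ [c]) none hch' hndl hxl hbx hrel'
      exact ⟨Mv.A c :: w', ⟨hfc, hw1⟩, by rw [show go a b (Mv.A c :: w') = (a ++ [c]) :: go b (a ++ [c]) w' from rfl, hw2]⟩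

lemma chain2_L0 {a b : List Bool} {v : List (List Bool)} (h : Chain2 a b v) :
    ∀ x, v[0]? = some x → IsChild b x ∨ IsChild a x := by
  rcases h with - | ⟨hs, -⟩
  · intro x hx; simp at hx
  · intro y hy; simp at hy; rwa [← hy]

lemma chain2_L1 {a b : List Bool} {v : List (List Bool)} (h : Chain2 a b v) :
    ∀ x y, v[0]? = some x → v[1]? = some y → IsChild x y ∨ IsChild b y := by
  rcases h with - | ⟨hs, htl⟩
  · intro x y hx; simp at hx
  · rename_i x' l
    intro x y hx hy
    simp at hx
    subst hx
    have : l[0]? = some y := by simpa using hy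
    exact chain2_L0 htl y this

lemma chain2_L2 {a b : List Bool} {v : List (List Bool)} (h : Chain2 a b v) :
    ∀ i x y z, v[i]? = some x → v[i+1]? = some y → v[i+2]? = some z →
      IsChild y z ∨ IsChild x z := by
  induction v generalizing a b with
  | nil => intro i x y z hx; simp at hx
  | cons x' l ih =>
    rcases h with - | ⟨hs, htl⟩
    intro i x y z hx hy hz
    cases i with
    | zero =>
      simp at hx
      subst hx
      have hy' : l[0]? = some y := by simpa using hy
      have hz' : l[1]? = some z := by simpa using hz
      exact chain2_L1 htl y z hy' hz'
    | succ j =>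
      have hx' : l[j]? = some x := by simpa using hx
      have hy' : l[j+1]? = some y := by simpa using hy
      have hz' : l[j+2]? = some z := by simpa using hz
      exact ih htl j x y z hx' hy' hz'

/-- `pr v (j+1)` is the `j`-th member (or `[]`), `pr v 0 = []`. -/
def pr (v : List (List Bool)) : ℕ → List Bool
  | 0 => []
  | (j+1) => (v[j]?).getD []

lemma chain2_of_two (v : List (List Bool)) (hv : IsTwoTreeLine v) : Chain2 [] [] v := by
  obtain ⟨hnd, hc2, hc3, hc4⟩ := hv
  have key : ∀ d k, k ≤ v.length → v.length - k = d →
      Chain2 (pr v (k-1)) (pr v k) (v.drop k) := by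
    intro d
    induction d with
    | zero =>
      intro k hk hd
      have : k = v.length := by omega
      subst this
      rw [List.drop_length]
      exact Chain2.nil _ _
    | succ d ihd =>
      intro k hk hd
      have hklt : k < v.length := by omega
      rw [List.drop_eq_getElem_cons hklt]
      have hnext : Chain2 (pr v k) (pr v (k+1)) (v.drop (k+1)) := ihd (k+1) (by omega) (by omega)
      have hpr : pr v (k+1) = v[k] := by
        simp [pr, List.getElem?_eq_getElem hklt]
      rw [hpr] at hnext
      refine Chain2.cons ?_ hnext
      match k with
      | 0 =>
        have h1 := hc2 (by omega)
        rw [List.get_eq_getElem] at h1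
        obtain ⟨c, hc⟩ := List.length_eq_one_iff.mp h1
        exact Or.inl ⟨c, by simp [pr, hc]⟩
      | 1 =>
        have h1 := hc3 (by omega)
        rw [List.get_eq_getElem, List.get_eq_getElem] at h1
        have hpr1 : pr v 1 = v[0] := by
          simp [pr, List.getElem?_eq_getElem (show 0 < v.length by omega)]
        rw [show pr v (1-1) = [] from rfl, hpr1]
        exact h1.symm
      | (i+2) =>
        have h1 := hc4 i (by omega)
        rw [List.get_eq_getElem, List.get_eq_getElem, List.get_eq_getElem] at h1
        have hpr1 : pr v (i+2) = v[i+1] := by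
          simp [pr, List.getElem?_eq_getElem (show i+1 < v.length by omega)]
        have hpr2 : pr v (i+2-1) = v[i] := by
          simp [pr, List.getElem?_eq_getElem (show i < v.length by omega)]
        rw [hpr1, hpr2]
        exact h1
  have := key v.length 0 (by omega) (by omega)
  simpa [pr] using this

def dec (w : List Mv) : List (List Bool) := go [] [] w

lemma rel_start (c : Bool) : ∀ c' : Bool, ([c] : List Bool) = [] ++ [c'] ↔ (some c : Option Bool) = some c' := by
  intro c'; simp

lemma dec_two {w : List Mv} (hw : Valid w) : IsTwoTreeLine (dec w) := by
  obtain ⟨c, r, rfl, hvf⟩ := hw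
  have hgo : dec (Mv.B c :: r) = [c] :: go [] [c] r := rfl
  have hfresh := go_fresh r [] [c] (some c) hvf (by simp) (by simp)
    (by simp) (rel_start c)
  have hnd : (dec (Mv.B c :: r)).Nodup := by
    rw [hgo]
    refine List.nodup_cons.mpr ⟨?_, hfresh.2⟩
    intro hmem
    exact (hfresh.1 _ hmem).2 rfl
  have hch : Chain2 [] [] (dec (Mv.B c :: r)) := by
    rw [hgo]
    exact Chain2.cons (Or.inl ⟨c, rfl⟩) (go_chain2 r [] [c])
  set v := dec (Mv.B c :: r) with hv
  refine ⟨hnd, ?_, ?_, ?_⟩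
  · intro h
    rw [List.get_eq_getElem]
    have := chain2_L0 hch v[0] (List.getElem?_eq_getElem h)
    rcases this with ⟨b, hb⟩ | ⟨b, hb⟩ <;> simp [hb]
  · intro h
    rw [List.get_eq_getElem, List.get_eq_getElem]
    have := chain2_L1 hch v[0] v[1] (List.getElem?_eq_getElem (by omega))
      (List.getElem?_eq_getElem h)
    exact this.symm
  · intro i h
    rw [List.get_eq_getElem, List.get_eq_getElem, List.get_eq_getElem]
    exact chain2_L2 hch i v[i] v[i+1] v[i+2]
      (List.getElem?_eq_getElem (by omega)) (List.getElem?_eq_getElem (by omega))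
      (List.getElem?_eq_getElem h)

lemma dec_inj {w w' : List Mv} (hw : Valid w) (hw' : Valid w') (h : dec w = dec w') :
    w = w' := by
  obtain ⟨c, r, rfl, hvf⟩ := hw
  obtain ⟨c', r', rfl, hvf'⟩ := hw'
  have hh : ([c] : List Bool) :: go [] [c] r = [c'] :: go [] [c'] r' := h
  have hc : c = c' := by
    have := ((List.cons.injEq _ _ _ _).mp hh).1
    simpa using this
  subst hc
  have htl : go [] [c] r = go [] [c] r' := ((List.cons.injEq _ _ _ _).mp hh).2
  rw [go_inj r r' [] [c] (some c) hvf hvf' (by simp) (rel_start c) htl]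

lemma dec_surj {v : List (List Bool)} (hv : IsTwoTreeLine v) (hne : v ≠ []) :
    ∃ w, Valid w ∧ dec w = v := by
  have hch := chain2_of_two v hv
  obtain ⟨hnd, hc2, -, -⟩ := hv
  cases v with
  | nil => exact absurd rfl hne
  | cons x l =>
    have hx1 : x.length = 1 := by
      have := hc2 (by simp)
      simpa using this
    obtain ⟨c, rfl⟩ := List.length_eq_one_iff.mp hx1
    rcases hch with - | ⟨-, htl⟩
    obtain ⟨w', hw1, hw2⟩ := go_surj l [] [c] (some c) htl
      (List.nodup_cons.mp hnd).2 (List.nodup_cons.mp hnd).1 (by simp) (rel_start c)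
    exact ⟨Mv.B c :: w', ⟨c, w', rfl, hw1⟩,
      by rw [show dec (Mv.B c :: w') = [c] :: go [] [c] w' from rfl, hw2]⟩

/-! ### Counting -/

lemma valid_ne_nil {w : List Mv} (h : Valid w) : w ≠ [] := by
  obtain ⟨c, r, rfl, -⟩ := h; simp

def fst' (f : Option Bool) : List Mv → Option Bool
  | [] => f
  | (Mv.B c :: r) => fst' (some c) r
  | (Mv.A _ :: r) => fst' none r

def FS (w : List Mv) : Option Bool :=
  match w.getLast? with
  | some (Mv.B c) => some c
  | _ => none

lemma vf_append (x : Mv) : ∀ (w : List Mv) (f : Option Bool),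
    VF f (w ++ [x]) ↔ VF f w ∧ VF (fst' f w) [x] := by
  intro w
  induction w with
  | nil => intro f; cases x <;> simp [VF, fst']
  | cons y r ih =>
    intro f
    cases y with
    | B c => simpa [VF, fst'] using ih (some c)
    | A c =>
      have h1 : VF f ((Mv.A c :: r) ++ [x]) = (f ≠ some c ∧ VF none (r ++ [x])) := rfl
      have h2 : VF f (Mv.A c :: r) = (f ≠ some c ∧ VF none r) := rfl
      have h3 : fst' f (Mv.A c :: r) = fst' none r := rfl
      rw [h1, h2, h3, ih none, and_assoc]

lemma fst'_eq_FS : ∀ (w : List Mv) (f : Option Bool), w ≠ [] → fst' f w = FS w := by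
  intro w
  induction w with
  | nil => intro f h; exact absurd rfl h
  | cons y r ih =>
    intro f _
    rcases eq_or_ne r [] with rfl | hr
    · cases y <;> simp [fst', FS]
    · cases y with
      | B c =>
        rw [show fst' f (Mv.B c :: r) = fst' (some c) r from rfl, ih (some c) hr]
        simp only [FS, getLast?_cons_of_ne _ hr]
      | A c =>
        rw [show fst' f (Mv.A c :: r) = fst' none r from rfl, ih none hr]
        simp only [FS, getLast?_cons_of_ne _ hr]

lemma valid_cons_B_iff (c : Bool) (r : List Mv) : Valid (Mv.B c :: r) ↔ VF (some c) r := by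
  constructor
  · rintro ⟨c', r', heq, hvf⟩
    obtain ⟨h1, h2⟩ := (List.cons.injEq _ _ _ _).mp heq
    cases h1; cases h2; exact hvf
  · intro h; exact ⟨c, r, rfl, h⟩

lemma valid_cons_A (c : Bool) (r : List Mv) : ¬ Valid (Mv.A c :: r) := by
  rintro ⟨c', r', heq, -⟩
  exact absurd ((List.cons.injEq _ _ _ _).mp heq).1 (by simp)

lemma valid_append_iff (w : List Mv) (x : Mv) (hne : w ≠ []) :
    Valid (w ++ [x]) ↔ Valid w ∧ VF (FS w) [x] := by
  obtain ⟨y, t, rfl⟩ := List.exists_cons_of_ne_nil hne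
  cases y with
  | B c =>
    rw [List.cons_append, valid_cons_B_iff, valid_cons_B_iff, vf_append x t (some c)]
    have : fst' (some c) t = FS (Mv.B c :: t) := by
      rcases eq_or_ne t [] with rfl | ht
      · simp [fst', FS]
      · rw [fst'_eq_FS t (some c) ht]
        simp only [FS, getLast?_cons_of_ne _ ht]
    rw [this]
  | A c =>
    constructor
    · intro h; exact absurd h (by rw [List.cons_append]; exact valid_cons_A c (t ++ [x]))
    · intro h; exact absurd h.1 (valid_cons_A c t)

lemma vf_single_B (f : Option Bool) (c : Bool) : VF f [Mv.B c] := trivial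

lemma vf_single_A_iff (f : Option Bool) (c : Bool) : VF f [Mv.A c] ↔ f ≠ some c := by
  constructor
  · intro h; exact h.1
  · intro h; exact ⟨h, trivial⟩

lemma decomp {w : List Mv} {x : Mv} (h : w.getLast? = some x) :
    w.dropLast ++ [x] = w := by
  have hne : w ≠ [] := by rintro rfl; simp at h
  have h2 := List.dropLast_append_getLast hne
  rw [List.getLast?_eq_getLast hne, Option.some_inj] at h
  rwa [h] at h2

def SD (m : ℕ) : Set (List Mv) :=
  {w | Valid w ∧ (∃ c, w.getLast? = some (Mv.B c)) ∧ (trk w).2 = m}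

def SK (m : ℕ) : Set (List Mv) :=
  {w | Valid w ∧ (∃ c, w.getLast? = some (Mv.A c)) ∧ (trk w).1 + 1 = m ∧ (trk w).2 = m}

def SE (m : ℕ) : Set (List Mv) :=
  {w | Valid w ∧ trk w = (m, m)}

def SS (m : ℕ) : Set (List Mv) :=
  {w | Valid w ∧ (trk w).2 = m}

lemma SS_finite (m : ℕ) : (SS m).Finite := by
  apply Set.Finite.subset (List.finite_length_le Mv (2 * m))
  intro w hw
  obtain ⟨-, hlen⟩ := hw
  have := trk_invariant w
  simp only [Set.mem_setOf_eq]
  omega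

lemma SD_subset (m : ℕ) : SD m ⊆ SS m := fun w hw => ⟨hw.1, hw.2.2⟩
lemma SK_subset (m : ℕ) : SK m ⊆ SS m := fun w hw => ⟨hw.1, hw.2.2.2⟩
lemma SE_subset (m : ℕ) : SE m ⊆ SS m := fun w hw => ⟨hw.1, by rw [hw.2]⟩

lemma SD_finite (m : ℕ) : (SD m).Finite := (SS_finite m).subset (SD_subset m)
lemma SK_finite (m : ℕ) : (SK m).Finite := (SS_finite m).subset (SK_subset m)
lemma SE_finite (m : ℕ) : (SE m).Finite := (SS_finite m).subset (SE_subset m)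

lemma trk_single (x : Mv) : trk [x] = stp (0, 0) x := rfl

lemma getLast?_some {w : List Mv} (hne : w ≠ []) : ∃ x, w.getLast? = some x :=
  ⟨_, List.getLast?_eq_getLast hne⟩

/-- a valid word whose track ends at level `m` has one of the three shapes. -/
lemma partition (m : ℕ) (hm : 1 ≤ m) : SS m = SD m ∪ (SK m ∪ SE m) := by
  ext w
  constructor
  · rintro ⟨hv, hsnd⟩
    have hne := valid_ne_nil hv
    obtain ⟨x, hx⟩ := getLast?_some hne
    cases x with
    | B c => exact Or.inl ⟨hv, ⟨c, hx⟩, hsnd⟩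
    | A c =>
      have hdec := decomp hx
      have htrk : trk w = stp (trk w.dropLast) (Mv.A c) := by
        conv_lhs => rw [← hdec]
        rw [trk_append]
      have hinv := trk_invariant w.dropLast
      rcases htp : trk w.dropLast with ⟨p, q⟩
      rw [htp] at htrk hinv
      have htrk' : trk w = (q, p + 1) := htrk
      have hsnd' : p + 1 = m := by rw [htrk'] at hsnd; exact hsnd
      simp only at hinv
      rcases eq_or_lt_of_le hinv.1 with heq | hlt
      · refine Or.inr (Or.inl ⟨hv, ⟨c, hx⟩, ?_, ?_⟩) <;> rw [htrk'] <;> simp <;> omega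
      · have hq : q = p + 1 := by omega
        refine Or.inr (Or.inr ⟨hv, ?_⟩)
        rw [htrk', hq, hsnd']
  · rintro (h | h | h)
    · exact SD_subset m h
    · exact SK_subset m h
    · exact SE_subset m h

lemma SD_SK_disj (m : ℕ) : Disjoint (SD m) (SK m) := by
  rw [Set.disjoint_left]
  rintro w ⟨-, ⟨c, hc⟩, -⟩ ⟨-, ⟨c', hc'⟩, -⟩
  rw [hc] at hc'
  simp at hc'

lemma trk_last_B {w : List Mv} {c : Bool} (h : w.getLast? = some (Mv.B c)) :
    (trk w).2 = (trk w).1 + 1 := by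
  have hdec := decomp h
  have htrk : trk w = stp (trk w.dropLast) (Mv.B c) := by
    conv_lhs => rw [← hdec]
    rw [trk_append]
  rcases htp : trk w.dropLast with ⟨p, q⟩
  rw [htp] at htrk
  rw [htrk]
  rfl

lemma SD_SE_disj (m : ℕ) : Disjoint (SD m) (SE m) := by
  rw [Set.disjoint_left]
  rintro w ⟨-, ⟨c, hc⟩, -⟩ ⟨-, htrk⟩
  have := trk_last_B hc
  rw [htrk] at this
  simp at this

lemma SK_SE_disj (m : ℕ) : Disjoint (SK m) (SE m) := by
  rw [Set.disjoint_left]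
  rintro w ⟨-, -, hfst, -⟩ ⟨-, htrk⟩
  rw [htrk] at hfst
  simp at hfst

lemma card_SS (m : ℕ) (hm : 1 ≤ m) :
    Nat.card (SS m) = Nat.card (SD m) + (Nat.card (SK m) + Nat.card (SE m)) := by
  rw [Nat.card_coe_set_eq, Nat.card_coe_set_eq, Nat.card_coe_set_eq,
    Nat.card_coe_set_eq, partition m hm]
  rw [Set.ncard_union_eq (by
      rw [Set.disjoint_union_right]
      exact ⟨SD_SK_disj m, SD_SE_disj m⟩) (SD_finite m) ((SK_finite m).union (SE_finite m))]
  rw [Set.ncard_union_eq (SK_SE_disj m) (SK_finite m) (SE_finite m)]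

lemma getLast?_app {α : Type*} (w : List α) (x : α) : (w ++ [x]).getLast? = some x := by
  simp

lemma dropLast_app {α : Type*} (w : List α) (x : α) : (w ++ [x]).dropLast = w := by
  simp

lemma trk_append_B (w : List Mv) (c : Bool) :
    trk (w ++ [Mv.B c]) = ((trk w).2, (trk w).2 + 1) := by
  rw [trk_append]; rcases h : trk w with ⟨p, q⟩; rfl

lemma trk_append_A (w : List Mv) (c : Bool) :
    trk (w ++ [Mv.A c]) = ((trk w).2, (trk w).1 + 1) := by
  rw [trk_append]; rcases h : trk w with ⟨p, q⟩; rfl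

lemma valid_single_B (c : Bool) : Valid [Mv.B c] := ⟨c, [], rfl, trivial⟩

lemma card_SD_one : Nat.card (SD 1) = 2 := by
  have : SD 1 = {[Mv.B false], [Mv.B true]} := by
    ext w
    constructor
    · rintro ⟨hv, ⟨c, hc⟩, hsnd⟩
      have hfst : (trk w).2 = (trk w).1 + 1 := trk_last_B hc
      have hinv := trk_invariant w
      have hlen : w.length ≤ 1 := by omega
      have hne := valid_ne_nil hv
      have : w.length = 1 := by
        cases w with
        | nil => exact absurd rfl hne
        | cons y t => simp only [List.length_cons] at hlen ⊢; omega
      obtain ⟨x, rfl⟩ := List.length_eq_one_iff.mp this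
      cases x with
      | B c' => cases c' <;> simp
      | A c' => exact absurd hv (valid_cons_A c' [])
    · intro hw
      rcases hw with rfl | rfl <;>
        exact ⟨valid_single_B _, ⟨_, rfl⟩, rfl⟩
  rw [this, Nat.card_coe_set_eq, Set.ncard_pair (by simp)]

lemma card_SK_one : Nat.card (SK 1) = 0 := by
  have : SK 1 = ∅ := by
    ext w
    simp only [Set.mem_empty_iff_false, iff_false]
    rintro ⟨hv, ⟨c, hc⟩, hfst, hsnd⟩
    have hinv := trk_invariant w
    have hlen : w.length ≤ 1 := by omega
    have hne := valid_ne_nil hv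
    have : w.length = 1 := by
      cases w with
      | nil => exact absurd rfl hne
      | cons y t => simp only [List.length_cons] at hlen ⊢; omega
    obtain ⟨x, rfl⟩ := List.length_eq_one_iff.mp this
    have : x = Mv.A c := by simpa using hc
    subst this
    exact absurd hv (valid_cons_A c [])
  rw [this, Nat.card_coe_set_eq, Set.ncard_empty]

lemma card_SD_succ (m : ℕ) (hm : 1 ≤ m) :
    Nat.card (SD (m + 1)) = 2 * Nat.card (SS m) := by
  have hF : ∀ w ∈ SS m, ∀ c : Bool, w ++ [Mv.B c] ∈ SD (m + 1) := by
    rintro w ⟨hv, hsnd⟩ c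
    refine ⟨?_, ⟨c, getLast?_app w _⟩, ?_⟩
    · rw [valid_append_iff w _ (valid_ne_nil hv)]
      exact ⟨hv, trivial⟩
    · rw [trk_append_B, hsnd]
  let F : ↥(SS m) × Bool → ↥(SD (m + 1)) :=
    fun p => ⟨p.1.1 ++ [Mv.B p.2], hF p.1.1 p.1.2 p.2⟩
  have hbij : Function.Bijective F := by
    constructor
    · rintro ⟨⟨w, hw⟩, c⟩ ⟨⟨w', hw'⟩, c'⟩ h
      simp only [F, Subtype.mk.injEq] at h
      have h1 : w = w' := by
        have := congrArg List.dropLast h; simpa using this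
      have h2 : c = c' := by
        have := congrArg List.getLast? h
        rw [getLast?_app, getLast?_app] at this
        simpa using this
      simp [h1, h2]
    · rintro ⟨w', hw'⟩
      obtain ⟨hv, ⟨c, hc⟩, hsnd⟩ := hw'
      have hdec := decomp hc
      have hne : w'.dropLast ≠ [] := by
        intro h
        rw [h] at hdec
        simp only [List.nil_append] at hdec
        rw [← hdec] at hsnd
        have : trk [Mv.B c] = (0, 1) := rfl
        rw [this] at hsnd
        simp at hsnd
        omega
      have hv0 : Valid w'.dropLast := by
        rw [← hdec, valid_append_iff _ _ hne] at hv
        exact hv.1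
      have htrk : (trk w'.dropLast).2 = m := by
        rw [← hdec, trk_append_B] at hsnd
        simpa using hsnd
      exact ⟨⟨⟨w'.dropLast, hv0, htrk⟩, c⟩, Subtype.ext hdec⟩
  calc Nat.card (SD (m + 1)) = Nat.card (↥(SS m) × Bool) :=
        (Nat.card_congr (Equiv.ofBijective F hbij)).symm
    _ = 2 * Nat.card (SS m) := by
        rw [Nat.card_prod]
        have : Nat.card Bool = 2 := by simp [Nat.card_eq_fintype_card]
        rw [this, mul_comm]

lemma SE_last {m : ℕ} (hm : 1 ≤ m) {w : List Mv} (hw : w ∈ SE m) :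
    ∃ c, w.getLast? = some (Mv.A c) := by
  obtain ⟨hv, htrk⟩ := hw
  obtain ⟨x, hx⟩ := getLast?_some (valid_ne_nil hv)
  cases x with
  | B c =>
    have := trk_last_B hx
    rw [htrk] at this
    simp at this
  | A c => exact ⟨c, hx⟩

lemma card_SK_succ (m : ℕ) (hm : 1 ≤ m) :
    Nat.card (SK (m + 1)) = 2 * Nat.card (SE m) := by
  have hF : ∀ w ∈ SE m, ∀ c : Bool, w ++ [Mv.A c] ∈ SK (m + 1) := by
    intro w hw c
    obtain ⟨hv, htrk⟩ := hw
    obtain ⟨c', hc'⟩ := SE_last hm ⟨hv, htrk⟩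
    refine ⟨?_, ⟨c, getLast?_app w _⟩, ?_, ?_⟩
    · rw [valid_append_iff w _ (valid_ne_nil hv)]
      refine ⟨hv, (vf_single_A_iff _ c).mpr ?_⟩
      simp only [FS, hc']
      simp
    · rw [trk_append_A, htrk]
    · rw [trk_append_A, htrk]
  let F : ↥(SE m) × Bool → ↥(SK (m + 1)) :=
    fun p => ⟨p.1.1 ++ [Mv.A p.2], hF p.1.1 p.1.2 p.2⟩
  have hbij : Function.Bijective F := by
    constructor
    · rintro ⟨⟨w, hw⟩, c⟩ ⟨⟨w', hw'⟩, c'⟩ h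
      simp only [F, Subtype.mk.injEq] at h
      have h1 : w = w' := by
        have := congrArg List.dropLast h; simpa using this
      have h2 : c = c' := by
        have := congrArg List.getLast? h
        rw [getLast?_app, getLast?_app] at this
        simpa using this
      simp [h1, h2]
    · rintro ⟨w', hw'⟩
      obtain ⟨hv, ⟨c, hc⟩, hfst, hsnd⟩ := hw'
      have hdec := decomp hc
      have hne : w'.dropLast ≠ [] := by
        intro h
        rw [h] at hdec
        simp only [List.nil_append] at hdec
        rw [← hdec] at hv
        exact valid_cons_A c [] hv
      have hv0 : Valid w'.dropLast := by
        rw [← hdec, valid_append_iff _ _ hne] at hv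
        exact hv.1
      have htrk : trk w'.dropLast = (m, m) := by
        rw [← hdec, trk_append_A] at hfst hsnd
        simp at hfst hsnd
        rcases h : trk w'.dropLast with ⟨p, q⟩
        rw [h] at hfst hsnd
        simp at hfst hsnd ⊢
        omega
      exact ⟨⟨⟨w'.dropLast, hv0, htrk⟩, c⟩, Subtype.ext hdec⟩
  calc Nat.card (SK (m + 1)) = Nat.card (↥(SE m) × Bool) :=
        (Nat.card_congr (Equiv.ofBijective F hbij)).symm
    _ = 2 * Nat.card (SE m) := by
        rw [Nat.card_prod]
        have : Nat.card Bool = 2 := by simp [Nat.card_eq_fintype_card]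
        rw [this, mul_comm]

def lastBit (w : List Mv) : Bool :=
  match w.getLast? with
  | some (Mv.B c) => c
  | _ => false

lemma card_SE_eq (m : ℕ) (hm : 1 ≤ m) :
    Nat.card (SE m) = Nat.card (SD m) + 2 * Nat.card (SK m) := by
  have hL : ∀ w ∈ SD m, w ++ [Mv.A (!(lastBit w))] ∈ SE m := by
    rintro w ⟨hv, ⟨c, hc⟩, hsnd⟩
    have hlb : lastBit w = c := by simp [lastBit, hc]
    have hFS : FS w = some c := by simp [FS, hc]
    refine ⟨?_, ?_⟩
    · rw [valid_append_iff w _ (valid_ne_nil hv)]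
      refine ⟨hv, (vf_single_A_iff _ _).mpr ?_⟩
      rw [hFS, hlb]
      simp
    · have hf := trk_last_B hc
      rw [trk_append_A]
      rw [hsnd]
      have : (trk w).1 + 1 = m := by omega
      rw [this]
  have hR : ∀ w ∈ SK m, ∀ c : Bool, w ++ [Mv.A c] ∈ SE m := by
    rintro w ⟨hv, ⟨c', hc'⟩, hfst, hsnd⟩ c
    have hFS : FS w = none := by simp [FS, hc']
    refine ⟨?_, ?_⟩
    · rw [valid_append_iff w _ (valid_ne_nil hv)]
      refine ⟨hv, (vf_single_A_iff _ _).mpr ?_⟩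
      rw [hFS]
      simp
    · rw [trk_append_A, hsnd, hfst]
  let G : ↥(SD m) ⊕ (↥(SK m) × Bool) → ↥(SE m) := fun p =>
    match p with
    | Sum.inl ⟨w, hw⟩ => ⟨w ++ [Mv.A (!(lastBit w))], hL w hw⟩
    | Sum.inr (⟨w, hw⟩, c) => ⟨w ++ [Mv.A c], hR w hw c⟩
  have hbij : Function.Bijective G := by
    constructor
    · rintro (⟨w, hw⟩ | ⟨⟨w, hw⟩, c⟩) (⟨w', hw'⟩ | ⟨⟨w', hw'⟩, c'⟩) h <;>
        simp only [G, Subtype.mk.injEq] at h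
      · have h1 : w = w' := by
          have := congrArg List.dropLast h; simpa using this
        simp [h1]
      · -- left vs right : contradiction via last of prefix
        have h1 : w = w' := by
          have := congrArg List.dropLast h; simpa using this
        obtain ⟨c0, hc0⟩ := hw.2.1
        obtain ⟨c1, hc1⟩ := hw'.2.1
        rw [h1, hc1] at hc0
        simp at hc0
      · have h1 : w = w' := by
          have := congrArg List.dropLast h; simpa using this
        obtain ⟨c0, hc0⟩ := hw.2.1
        obtain ⟨c1, hc1⟩ := hw'.2.1
        rw [h1, hc1] at hc0
        simp at hc0
      · have h1 : w = w' := by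
          have := congrArg List.dropLast h; simpa using this
        have h2 : c = c' := by
          have := congrArg List.getLast? h
          rw [getLast?_app, getLast?_app] at this
          simpa using this
        simp [h1, h2]
    · rintro ⟨w', hw'⟩
      obtain ⟨c, hc⟩ := SE_last hm hw'
      obtain ⟨hv, htrk⟩ := hw'
      have hdec := decomp hc
      have hne : w'.dropLast ≠ [] := by
        intro h
        rw [h] at hdec
        simp only [List.nil_append] at hdec
        rw [← hdec] at hv
        exact valid_cons_A c [] hv
      have hva : Valid w'.dropLast ∧ VF (FS w'.dropLast) [Mv.A c] := by
        rw [← valid_append_iff _ _ hne, hdec]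
        exact hv
      have htrk0 : (trk w'.dropLast).2 = m ∧ (trk w'.dropLast).1 + 1 = m := by
        have : trk (w'.dropLast ++ [Mv.A c]) = (m, m) := by rw [hdec, htrk]
        rw [trk_append_A] at this
        exact ⟨congrArg Prod.fst this, congrArg Prod.snd this⟩
      obtain ⟨x, hx⟩ := getLast?_some hne
      cases x with
      | B c' =>
        refine ⟨Sum.inl ⟨w'.dropLast, hva.1, ⟨c', hx⟩, htrk0.1⟩, ?_⟩
        have hFS : FS w'.dropLast = some c' := by simp [FS, hx]
        have hlb : lastBit w'.dropLast = c' := by simp [lastBit, hx]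
        have hcc : c' ≠ c := by
          have := (vf_single_A_iff _ c).mp hva.2
          rw [hFS] at this
          simpa using this
        have hnb : Bool.not (lastBit w'.dropLast) = c := by
          rw [hlb]
          cases c <;> cases c' <;> simp_all
        refine Subtype.ext ?_
        show w'.dropLast ++ [Mv.A (Bool.not (lastBit w'.dropLast))] = w'
        rw [hnb]
        exact hdec
      | A c' =>
        refine ⟨Sum.inr (⟨w'.dropLast, hva.1, ⟨c', hx⟩, htrk0.2, htrk0.1⟩, c), ?_⟩
        exact Subtype.ext hdec
  haveI : Finite ↥(SD m) := (SD_finite m).to_subtype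
  haveI : Finite ↥(SK m) := (SK_finite m).to_subtype
  haveI : Finite (↥(SK m) × Bool) := inferInstance
  calc Nat.card (SE m) = Nat.card (↥(SD m) ⊕ (↥(SK m) × Bool)) :=
        (Nat.card_congr (Equiv.ofBijective G hbij)).symm
    _ = Nat.card (SD m) + 2 * Nat.card (SK m) := by
        rw [Nat.card_sum, Nat.card_prod]
        have : Nat.card Bool = 2 := by simp [Nat.card_eq_fintype_card]
        rw [this, mul_comm]

lemma main_count : ∀ m : ℕ, 1 ≤ m →
    ((Nat.card (SS m) : ℝ) = ((4 + 2 * Real.sqrt 3) ^ m + (4 - 2 * Real.sqrt 3) ^ m) / 2) ∧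
    ((Nat.card (SE m) : ℝ) * (2 * Real.sqrt 3) =
      (4 + 2 * Real.sqrt 3) ^ m - (4 - 2 * Real.sqrt 3) ^ m) := by
  have hr : Real.sqrt 3 ^ 2 = 3 := Real.sq_sqrt (by norm_num)
  intro m hm
  induction m, hm using Nat.le_induction with
  | base =>
    have hE : Nat.card (SE 1) = 2 := by
      rw [card_SE_eq 1 le_rfl, card_SD_one, card_SK_one]
    have hS : Nat.card (SS 1) = 4 := by
      rw [card_SS 1 le_rfl, card_SD_one, card_SK_one, hE]
    rw [hS, hE]
    constructor
    · push_cast; ring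
    · push_cast; ring
  | succ m hm ih =>
    obtain ⟨hS, hE⟩ := ih
    have hD' := card_SD_succ m hm
    have hK' := card_SK_succ m hm
    have hE' := card_SE_eq (m + 1) (by omega)
    have hS' := card_SS (m + 1) (by omega)
    have hSnum : Nat.card (SS (m+1)) = 4 * Nat.card (SS m) + 6 * Nat.card (SE m) := by
      omega
    have hEnum : Nat.card (SE (m+1)) = 2 * Nat.card (SS m) + 4 * Nat.card (SE m) := by
      omega
    rw [hSnum, hEnum]
    set r := Real.sqrt 3 with hrr
    constructor
    · push_cast
      rw [pow_succ, pow_succ]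
      linear_combination (4 : ℝ) * hS + r * hE + (-2 * (Nat.card (SE m) : ℝ)) * hr
    · push_cast
      rw [pow_succ, pow_succ]
      linear_combination (4 * r) * hS + (4 : ℝ) * hE

theorem count_two_tree_lines_ending_at_level (n : ℕ) (hn : 2 ≤ n) :
    (Nat.card {v : List (List Bool) //
        IsTwoTreeLine v ∧ ∃ l : List Bool, v.getLast? = some l ∧ l.length = n - 1} : ℝ) =
      ((4 + 2 * Real.sqrt 3) ^ (n - 1) + (4 - 2 * Real.sqrt 3) ^ (n - 1)) / 2 := by
  set m := n - 1 with hm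
  have hm1 : 1 ≤ m := by omega
  have key : Nat.card {v : List (List Bool) //
      IsTwoTreeLine v ∧ ∃ l : List Bool, v.getLast? = some l ∧ l.length = m}
      = Nat.card (SS m) := by
    refine (Nat.card_congr (Equiv.ofBijective ?_ ?_)).symm
    · refine fun w => ⟨dec w.1, dec_two w.2.1, ?_⟩
      obtain ⟨hv, htrk⟩ := w.2
      obtain ⟨l, hl, hlen⟩ := go_last w.1 [] [] (valid_ne_nil hv)
      exact ⟨l, hl, by rw [hlen]; simpa [trk] using htrk⟩
    · constructor
      · rintro ⟨w, hw⟩ ⟨w', hw'⟩ h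
        simp only [Subtype.mk.injEq] at h
        exact Subtype.ext (dec_inj hw.1 hw'.1 h)
      · rintro ⟨v, hv, l, hl, hlen⟩
        have hne : v ≠ [] := by rintro rfl; simp at hl
        obtain ⟨w, hwv, hdw⟩ := dec_surj hv hne
        refine ⟨⟨w, hwv, ?_⟩, Subtype.ext hdw⟩
        obtain ⟨l', hl', hlen'⟩ := go_last w [] [] (valid_ne_nil hwv)
        have : (dec w).getLast? = some l' := hl'
        rw [hdw, hl] at this
        have : l = l' := by simpa using this
        have h2 : l'.length = (trk w).2 := by rw [hlen']; rfl
        rw [← h2, ← this, hlen]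
  rw [key]
  exact (main_count m hm1).1
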